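/- arXiv:1312.1378 — 3 statements merged into one kernel-verified Lean document; each statement's English description precedes it below -/
import Mathlib

section
/- Let (r_t)_{t ∈ ℤ} be a stationary N-valued stochastic process, let s(T) = E[w(0,T)] denote the average working-set size, and let m(T) = P(r_1 ∉ {r_s : 1−T ≤ s ≤ 0}) denote the miss rate with window size T. Then the miss rate is the (discrete) derivative of the average working-set size: m(T) = s(T+1) − s(T) for every T ≥ 0. -/
open MeasureTheory

/-- The working set `W(t,T)` of a reference string: the set of distinct units
referenced in the window `[t-T+1, t]`. -/
noncomputable def workingSet {N : Type*} [DecidableEq N] (r : ℤ → N) (t : ℤ) (T : ℕ) : Finset N :=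
  (Finset.Icc (t - T + 1) t).image r

section
variable {Ω : Type*} [MeasurableSpace Ω] {N : Type*} [Fintype N] [DecidableEq N]
  [MeasurableSpace N] [MeasurableSingletonClass N]

set_option linter.unusedSectionVars false

lemma ws_card_eq_sum (r : ℤ → Ω → N) (t : ℤ) (T : ℕ) (ω : Ω) :
    ((workingSet (fun s => r s ω) t T).card : ℝ)
      = ∑ n : N, Set.indicator {ω' | ∃ s ∈ Finset.Icc (t - (T:ℤ) + 1) t, r s ω' = n}
          (fun _ => (1:ℝ)) ω := by
  classical
  have h : ∀ n : N, Set.indicator {ω' | ∃ s ∈ Finset.Icc (t - (T:ℤ) + 1) t, r s ω' = n}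
      (fun _ => (1:ℝ)) ω = if n ∈ workingSet (fun s => r s ω) t T then (1:ℝ) else 0 := by
    intro n
    by_cases hn : n ∈ workingSet (fun s => r s ω) t T
    · have : ω ∈ {ω' | ∃ s ∈ Finset.Icc (t - (T:ℤ) + 1) t, r s ω' = n} := by
        simpa [workingSet, Finset.mem_image] using hn
      simp only [Set.indicator_of_mem this, if_pos hn]
    · have : ω ∉ {ω' | ∃ s ∈ Finset.Icc (t - (T:ℤ) + 1) t, r s ω' = n} := by
        simpa [workingSet, Finset.mem_image] using hn
      simp only [Set.indicator_of_notMem this, if_neg hn]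
  simp only [h]
  rw [Finset.sum_boole]
  simp [Finset.filter_mem_eq_inter]

lemma ws_exists_meas (r : ℤ → Ω → N) (hmeas : ∀ t, Measurable (r t)) (I : Finset ℤ) (n : N) :
    MeasurableSet {ω | ∃ s ∈ I, r s ω = n} := by
  have : {ω | ∃ s ∈ I, r s ω = n} = ⋃ s ∈ I, r s ⁻¹' {n} := by ext ω; simp
  rw [this]
  exact MeasurableSet.biUnion I.countable_toSet (fun s _ => hmeas s (measurableSet_singleton n))

lemma ws_card_integrable (μ : Measure Ω) [IsProbabilityMeasure μ]
    (r : ℤ → Ω → N) (hmeas : ∀ t, Measurable (r t)) (t : ℤ) (T : ℕ) :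
    Integrable (fun ω => ((workingSet (fun s => r s ω) t T).card : ℝ)) μ := by
  have h : (fun ω => ((workingSet (fun s => r s ω) t T).card : ℝ))
      = fun ω => ∑ n : N, Set.indicator {ω' | ∃ s ∈ Finset.Icc (t - (T:ℤ) + 1) t, r s ω' = n}
          (fun _ => (1:ℝ)) ω := funext fun ω => ws_card_eq_sum r t T ω
  rw [h]
  exact integrable_finset_sum _ fun n _ =>
    (integrable_const (1:ℝ)).indicator (ws_exists_meas r hmeas _ n)

lemma ws_card_measurable (r : ℤ → Ω → N) (hmeas : ∀ t, Measurable (r t)) (t : ℤ) (T : ℕ) :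
    Measurable (fun ω => ((workingSet (fun s => r s ω) t T).card : ℝ)) := by
  have h : (fun ω => ((workingSet (fun s => r s ω) t T).card : ℝ))
      = fun ω => ∑ n : N, Set.indicator {ω' | ∃ s ∈ Finset.Icc (t - (T:ℤ) + 1) t, r s ω' = n}
          (fun _ => (1:ℝ)) ω := funext fun ω => ws_card_eq_sum r t T ω
  rw [h]
  exact Finset.measurable_sum _ fun n _ =>
    measurable_const.indicator (ws_exists_meas r hmeas _ n)

lemma ws_shift (r : ℤ → Ω → N) (T : ℕ) (ω : Ω) :
    workingSet (fun t : ℤ => r (t + 1) ω) 0 (T + 1)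
      = workingSet (fun s => r s ω) 1 (T + 1) := by
  ext n
  simp only [workingSet, Finset.mem_image, Finset.mem_Icc]
  constructor
  · rintro ⟨s, ⟨h1, h2⟩, rfl⟩; exact ⟨s + 1, ⟨by omega, by omega⟩, rfl⟩
  · rintro ⟨s, ⟨h1, h2⟩, rfl⟩; exact ⟨s - 1, ⟨by omega, by omega⟩, by simp⟩

end


/-- For a stationary `N`-valued process, the miss rate
`m(T) = P(r 1 ∉ W(0,T))` is the discrete derivative of the average working-set size
`s(T) = E[w(0,T)]`:  `m(T) = s(T+1) - s(T)` for all `T ≥ 0`. -/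
theorem missRate_eq_discrete_deriv_avg_workingSetSize
    {Ω : Type*} [MeasurableSpace Ω] (μ : Measure Ω) [IsProbabilityMeasure μ]
    {N : Type*} [Fintype N] [DecidableEq N] [MeasurableSpace N] [MeasurableSingletonClass N]
    (r : ℤ → Ω → N) (hmeas : ∀ t, Measurable (r t))
    (hstat : Measure.map (fun ω => fun t : ℤ => r (t + 1) ω) μ
           = Measure.map (fun ω => fun t : ℤ => r t ω) μ)
    (T : ℕ) :
    (μ {ω | r 1 ω ∉ workingSet (fun s => r s ω) 0 T}).toReal
      = (∫ ω, ((workingSet (fun s => r s ω) 0 (T + 1)).card : ℝ) ∂μ)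
        - ∫ ω, ((workingSet (fun s => r s ω) 0 T).card : ℝ) ∂μ := by
  classical
  set A : Set Ω := {ω | r 1 ω ∉ workingSet (fun s => r s ω) 0 T} with hA
  have hAmeas : MeasurableSet A := by
    have h : A = (⋃ s ∈ Finset.Icc (0 - (T:ℤ) + 1) 0, {ω | r s ω = r 1 ω})ᶜ := by
      ext ω; simp [hA, workingSet, Finset.mem_image]
    rw [h]
    exact (MeasurableSet.biUnion (Finset.countable_toSet _) fun s _ =>
      measurableSet_eq_fun (hmeas s) (hmeas 1)).compl
  -- Step 1: stationarity — E[|W(1,T+1)|] = E[|W(0,T+1)|]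
  have hFmeas : Measurable (fun g : ℤ → N => ((workingSet g 0 (T + 1)).card : ℝ)) :=
    ws_card_measurable (Ω := ℤ → N) (fun t g => g t)
      (fun t => measurable_pi_apply t) 0 (T + 1)
  have hpath : Measurable (fun ω => fun t : ℤ => r t ω) :=
    measurable_pi_lambda _ fun t => hmeas t
  have hshift : Measurable (fun ω => fun t : ℤ => r (t + 1) ω) :=
    measurable_pi_lambda _ fun t => hmeas (t + 1)
  have hstat' : ∫ ω, ((workingSet (fun s => r s ω) 1 (T + 1)).card : ℝ) ∂μ
      = ∫ ω, ((workingSet (fun s => r s ω) 0 (T + 1)).card : ℝ) ∂μ := by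
    have h1 : ∫ ω, ((workingSet (fun s => r s ω) 1 (T + 1)).card : ℝ) ∂μ
        = ∫ g, ((workingSet g 0 (T + 1)).card : ℝ)
            ∂(Measure.map (fun ω => fun t : ℤ => r (t + 1) ω) μ) := by
      rw [integral_map hshift.aemeasurable hFmeas.aestronglyMeasurable]
      exact integral_congr_ae (Filter.Eventually.of_forall fun ω => by simp only [ws_shift])
    have h2 : ∫ g, ((workingSet g 0 (T + 1)).card : ℝ)
            ∂(Measure.map (fun ω => fun t : ℤ => r t ω) μ)
        = ∫ ω, ((workingSet (fun s => r s ω) 0 (T + 1)).card : ℝ) ∂μ := by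
      rw [integral_map hpath.aemeasurable hFmeas.aestronglyMeasurable]
    rw [h1, hstat, h2]
  -- Step 2: W(1,T+1) = insert (r 1) W(0,T)
  have hins : ∀ ω, workingSet (fun s => r s ω) 1 (T + 1)
      = insert (r 1 ω) (workingSet (fun s => r s ω) 0 T) := by
    intro ω
    have h : Finset.Icc (1 - ((T:ℤ) + 1) + 1) 1 = insert (1:ℤ) (Finset.Icc (0 - (T:ℤ) + 1) 0) := by
      ext x; simp [Finset.mem_Icc]; omega
    simp only [workingSet, Nat.cast_add, Nat.cast_one, h, Finset.image_insert]
  -- Step 3: pointwise card identity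
  have hcard : ∀ ω, ((workingSet (fun s => r s ω) 1 (T + 1)).card : ℝ)
      = ((workingSet (fun s => r s ω) 0 T).card : ℝ) + A.indicator (fun _ => (1:ℝ)) ω := by
    intro ω
    rw [hins ω]
    by_cases hmem : r 1 ω ∈ workingSet (fun s => r s ω) 0 T
    · have : ω ∉ A := by simp [hA, hmem]
      rw [Finset.insert_eq_self.mpr hmem, Set.indicator_of_notMem this, add_zero]
    · have : ω ∈ A := hmem
      rw [Finset.card_insert_of_notMem hmem, Set.indicator_of_mem this]
      push_cast; ring
  -- Step 4: integrate
  have hint1 : Integrable (fun ω => ((workingSet (fun s => r s ω) 0 T).card : ℝ)) μ :=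
    ws_card_integrable μ r hmeas 0 T
  have hint2 : Integrable (A.indicator (fun _ => (1:ℝ))) μ :=
    (integrable_const (1:ℝ)).indicator hAmeas
  have hsum : ∫ ω, ((workingSet (fun s => r s ω) 1 (T + 1)).card : ℝ) ∂μ
      = (∫ ω, ((workingSet (fun s => r s ω) 0 T).card : ℝ) ∂μ) + (μ A).toReal := by
    calc ∫ ω, ((workingSet (fun s => r s ω) 1 (T + 1)).card : ℝ) ∂μ
        = ∫ ω, (((workingSet (fun s => r s ω) 0 T).card : ℝ)
            + A.indicator (fun _ => (1:ℝ)) ω) ∂μ :=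
          integral_congr_ae (Filter.Eventually.of_forall hcard)
      _ = (∫ ω, ((workingSet (fun s => r s ω) 0 T).card : ℝ) ∂μ)
            + ∫ ω, A.indicator (fun _ => (1:ℝ)) ω ∂μ := integral_add hint1 hint2
      _ = (∫ ω, ((workingSet (fun s => r s ω) 0 T).card : ℝ) ∂μ) + (μ A).toReal := by
          rw [integral_indicator_const (1:ℝ) hAmeas, smul_eq_mul, mul_one, measureReal_def]
  rw [← hstat', hsum]
  ring
end

section
/- Let (r_t)_{t ∈ ℤ} be a stationary N-valued stochastic process and m(T) = P(r_1 ∉ {r_s : 1−T ≤ s ≤ 0}) the miss rate with window size T. Then m is nonincreasing: m(T+1) ≤ m(T) for all T ≥ 0. Consequently the average working-set size s(T) = E[w(0,T)] is concave in the discrete sense: its increments s(T+1) − s(T) are nonincreasing in T. -/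
open MeasureTheory

section Aux

variable {Ω : Type*} [MeasurableSpace Ω]
variable {N : Type*} [Fintype N] [DecidableEq N] [MeasurableSpace N] [MeasurableSingletonClass N]

/-- Measurability of the set where a fixed value belongs to the image of a finite window. -/
lemma aux_measSet_mem (r : ℤ → Ω → N) (hmeas : ∀ t, Measurable (r t)) (I : Finset ℤ) (n : N) :
    MeasurableSet {ω | n ∈ I.image (fun u => r u ω)} := by
  have h : {ω | n ∈ I.image (fun u => r u ω)} = ⋃ u ∈ I, {ω | r u ω = n} := by
    ext ω
    simp [Finset.mem_image, eq_comm]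
  rw [h]
  refine MeasurableSet.biUnion I.countable_toSet fun u _ => ?_
  have : {ω | r u ω = n} = (r u) ⁻¹' {n} := by ext ω; simp
  rw [this]
  exact hmeas u (measurableSet_singleton n)

lemma aux_meas_card (r : ℤ → Ω → N) (hmeas : ∀ t, Measurable (r t)) (I : Finset ℤ) :
    Measurable fun ω => ((I.image (fun u => r u ω)).card : ℝ) := by
  classical
  have hrw : ∀ ω, ((I.image (fun u => r u ω)).card : ℝ)
      = ∑ n : N, if n ∈ I.image (fun u => r u ω) then (1 : ℝ) else 0 := by
    intro ω
    rw [Finset.sum_ite_mem, Finset.univ_inter, Finset.sum_const]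
    simp
  simp only [hrw]
  refine Finset.measurable_sum _ fun n _ => ?_
  exact Measurable.ite (aux_measSet_mem r hmeas I n) measurable_const measurable_const

lemma aux_integrable_card (μ : Measure Ω) [IsProbabilityMeasure μ]
    (r : ℤ → Ω → N) (hmeas : ∀ t, Measurable (r t)) (I : Finset ℤ) :
    Integrable (fun ω => ((I.image (fun u => r u ω)).card : ℝ)) μ := by
  refine ⟨(aux_meas_card r hmeas I).aestronglyMeasurable, ?_⟩
  refine HasFiniteIntegral.of_bounded (C := (Fintype.card N : ℝ)) ?_
  filter_upwards with ω
  rw [Real.norm_natCast]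
  exact_mod_cast Finset.card_le_univ _

lemma aux_measSet_self (r : ℤ → Ω → N) (hmeas : ∀ t, Measurable (r t)) (I : Finset ℤ) :
    MeasurableSet {ω | r 1 ω ∈ I.image (fun u => r u ω)} := by
  have h : {ω | r 1 ω ∈ I.image (fun u => r u ω)}
      = ⋃ n : N, ({ω | r 1 ω = n} ∩ {ω | n ∈ I.image (fun u => r u ω)}) := by
    ext ω
    simp only [Set.mem_setOf_eq, Set.mem_iUnion, Set.mem_inter_iff]
    constructor
    · intro h; exact ⟨r 1 ω, rfl, h⟩
    · rintro ⟨n, rfl, h⟩; exact h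
  rw [h]
  refine MeasurableSet.iUnion fun n => MeasurableSet.inter ?_ (aux_measSet_mem r hmeas I n)
  have : {ω | r 1 ω = n} = (r 1) ⁻¹' {n} := by ext ω; simp
  rw [this]
  exact hmeas 1 (measurableSet_singleton n)

end Aux

/-- For a stationary `N`-valued process, the miss rate
`m(T) = P(r 1 ∉ W(0,T))` is nonincreasing in `T`, and consequently the average
working-set size `s(T) = E[w(0,T)]` is discretely concave: its increments
`s(T+1) - s(T)` are nonincreasing in `T`. -/
theorem missRate_antitone_and_avg_workingSetSize_concave
    {Ω : Type*} [MeasurableSpace Ω] (μ : Measure Ω) [IsProbabilityMeasure μ]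
    {N : Type*} [Fintype N] [DecidableEq N] [MeasurableSpace N] [MeasurableSingletonClass N]
    (r : ℤ → Ω → N) (hmeas : ∀ t, Measurable (r t))
    (hstat : Measure.map (fun ω => fun t : ℤ => r (t + 1) ω) μ
           = Measure.map (fun ω => fun t : ℤ => r t ω) μ)
    (m s : ℕ → ℝ)
    (hm : ∀ T : ℕ, m T = (μ {ω | r 1 ω ∉ workingSet (fun u => r u ω) 0 T}).toReal)
    (hs : ∀ T : ℕ, s T = ∫ ω, ((workingSet (fun u => r u ω) 0 T).card : ℝ) ∂μ) :
    (∀ T : ℕ, m (T + 1) ≤ m T) ∧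
    (∀ T : ℕ, s (T + 2) - s (T + 1) ≤ s (T + 1) - s T) := by
  classical
  have hmono : ∀ T : ℕ, m (T + 1) ≤ m T := by
    intro T
    rw [hm, hm]
    refine (ENNReal.toReal_le_toReal (measure_ne_top _ _) (measure_ne_top _ _)).mpr ?_
    refine measure_mono fun ω hω => ?_
    simp only [Set.mem_setOf_eq, workingSet] at hω ⊢
    intro hmem
    exact hω (Finset.image_subset_image
      (Finset.Icc_subset_Icc (by push_cast; linarith) le_rfl) hmem)
  have key : ∀ T : ℕ, s (T + 1) - s T = m T := by
    intro T
    set I₀ : Finset ℤ := Finset.Icc (0 - (T : ℤ) + 1) 0 with hI₀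
    set I₁ : Finset ℤ := Finset.Icc (-(T : ℤ)) 0 with hI₁
    set I₂ : Finset ℤ := Finset.Icc (0 - (T : ℤ) + 1) 1 with hI₂
    have hW : ∀ ω, workingSet (fun u => r u ω) 0 T = I₀.image (fun u => r u ω) :=
      fun ω => rfl
    have hW1 : ∀ ω, workingSet (fun u => r u ω) 0 (T + 1) = I₁.image (fun u => r u ω) := by
      intro ω
      unfold workingSet
      have h : (0 : ℤ) - ((T + 1 : ℕ) : ℤ) + 1 = -(T : ℤ) := by push_cast; ring
      rw [h]
    have hs1 : s (T + 1) = ∫ ω, ((I₁.image (fun u => r u ω)).card : ℝ) ∂μ := by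
      rw [hs]
      congr 1
      funext ω
      rw [hW1]
    have hmeaspath : Measurable fun ω => (fun t : ℤ => r t ω) :=
      measurable_pi_lambda _ hmeas
    have hmeaspath1 : Measurable fun ω => (fun t : ℤ => r (t + 1) ω) :=
      measurable_pi_lambda _ (fun t => hmeas (t + 1))
    have hG : Measurable fun x : ℤ → N => ((I₁.image x).card : ℝ) :=
      aux_meas_card (fun t (x : ℤ → N) => x t) (fun t => measurable_pi_apply t) I₁
    have hshift : ∫ ω, ((I₁.image (fun u => r u ω)).card : ℝ) ∂μ
        = ∫ ω, ((I₂.image (fun u => r u ω)).card : ℝ) ∂μ := by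
      have h1 : ∫ ω, ((I₁.image (fun u => r u ω)).card : ℝ) ∂μ
          = ∫ x, ((I₁.image x).card : ℝ)
              ∂(Measure.map (fun ω => fun t : ℤ => r t ω) μ) := by
        rw [integral_map hmeaspath.aemeasurable hG.aestronglyMeasurable]
      have h2 : ∫ x, ((I₁.image x).card : ℝ)
              ∂(Measure.map (fun ω => fun t : ℤ => r (t + 1) ω) μ)
          = ∫ ω, ((I₁.image (fun u => r (u + 1) ω)).card : ℝ) ∂μ := by
        rw [integral_map hmeaspath1.aemeasurable hG.aestronglyMeasurable]
      rw [h1, ← hstat, h2]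
      congr 1
      funext ω
      congr 2
      have hcomp : (fun u : ℤ => r (u + 1) ω)
          = (fun u : ℤ => r u ω) ∘ (fun u : ℤ => u + 1) := rfl
      rw [hcomp, ← Finset.image_image]
      congr 1
      rw [hI₁, hI₂, Finset.image_add_right_Icc]
      congr 1
      ring
    have hdecomp : ∀ ω, ((I₂.image (fun u => r u ω)).card : ℝ)
        = ((workingSet (fun u => r u ω) 0 T).card : ℝ)
          + Set.indicator {ω' | r 1 ω' ∉ workingSet (fun u => r u ω') 0 T}
              (fun _ => (1 : ℝ)) ω := by
      intro ω
      have hins : I₂ = insert 1 I₀ := by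
        ext u
        simp only [hI₂, hI₀, Finset.mem_Icc, Finset.mem_insert]
        omega
      rw [hins, Finset.image_insert]
      by_cases hmem : r 1 ω ∈ I₀.image (fun u => r u ω)
      · rw [Finset.insert_eq_self.mpr hmem, hW,
          Set.indicator_of_notMem (by simp only [Set.mem_setOf_eq, hW]; exact not_not_intro hmem)]
        ring
      · rw [Finset.card_insert_of_notMem hmem, hW,
          Set.indicator_of_mem (by simp only [Set.mem_setOf_eq, hW]; exact hmem)]
        push_cast
        ring
    have hintW : Integrable (fun ω => ((workingSet (fun u => r u ω) 0 T).card : ℝ)) μ :=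
      aux_integrable_card μ r hmeas I₀
    have hsetmeas : MeasurableSet {ω | r 1 ω ∉ workingSet (fun u => r u ω) 0 T} := by
      have h := aux_measSet_self r hmeas I₀
      have heq : {ω | r 1 ω ∉ workingSet (fun u => r u ω) 0 T}
          = {ω | r 1 ω ∈ I₀.image (fun u => r u ω)}ᶜ := by
        ext ω
        simp [hW]
      rw [heq]
      exact h.compl
    have hintInd : Integrable
        (Set.indicator {ω' | r 1 ω' ∉ workingSet (fun u => r u ω') 0 T}
          (fun _ => (1 : ℝ))) μ :=
      (integrable_const (1 : ℝ)).indicator hsetmeas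
    have hs2 : s (T + 1) = s T + m T := by
      rw [hs1, hshift]
      have hfun : (fun ω => ((I₂.image (fun u => r u ω)).card : ℝ))
          = fun ω => ((workingSet (fun u => r u ω) 0 T).card : ℝ)
            + Set.indicator {ω' | r 1 ω' ∉ workingSet (fun u => r u ω') 0 T}
                (fun _ => (1 : ℝ)) ω := funext hdecomp
      rw [hfun, integral_add hintW hintInd, ← hs, hm]
      congr 1
      exact integral_indicator_one hsetmeas
    linarith [hs2]
  refine ⟨hmono, fun T => ?_⟩
  have k1 := key T
  have k2 := key (T + 1)
  have h := hmono T
  have hT : T + 1 + 1 = T + 2 := rfl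
  rw [hT] at k2
  linarith
end

section
/- Let (r_t)_{t ∈ ℤ} be a stationary N-valued stochastic process and m(T) = P(r_1 ∉ {r_s : 1−T ≤ s ≤ 0}) the miss rate. Then the sign-inverted discrete slope of the miss rate equals the interreference distance density: for every T ≥ 0, m(T) − m(T+1) = P( r_1 = r_{−T} and r_1 ∉ {r_s : 1−T ≤ s ≤ 0} ), i.e. the probability that the next reference repeats a unit at backward distance exactly T+1; in particular m(T) − m(T+1) ≥ 0. -/
open MeasureTheory

lemma meas_eq_aux {Ω N : Type*} [MeasurableSpace Ω] [Fintype N] [MeasurableSpace N]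
    [MeasurableSingletonClass N] {f g : Ω → N} (hf : Measurable f) (hg : Measurable g) :
    MeasurableSet {ω | f ω = g ω} := by
  have h : {ω | f ω = g ω} = ⋃ n : N, f ⁻¹' {n} ∩ g ⁻¹' {n} := by
    ext ω
    simp only [Set.mem_setOf_eq, Set.mem_iUnion, Set.mem_inter_iff, Set.mem_preimage,
      Set.mem_singleton_iff]
    constructor
    · intro h; exact ⟨f ω, rfl, h.symm⟩
    · rintro ⟨n, h1, h2⟩; rw [h1, h2]
  rw [h]
  exact MeasurableSet.iUnion fun n =>
    (hf (measurableSet_singleton n)).inter (hg (measurableSet_singleton n))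

lemma meas_ws_aux {Ω N : Type*} [MeasurableSpace Ω] [Fintype N] [DecidableEq N]
    [MeasurableSpace N] [MeasurableSingletonClass N]
    (r : ℤ → Ω → N) (hmeas : ∀ t, Measurable (r t)) (T : ℕ) :
    MeasurableSet {ω | r 1 ω ∈ workingSet (fun u => r u ω) 0 T} := by
  have h : {ω | r 1 ω ∈ workingSet (fun u => r u ω) 0 T}
      = ⋃ s ∈ Finset.Icc (0 - (T : ℤ) + 1) 0, {ω | r s ω = r 1 ω} := by
    ext ω
    simp [workingSet, Finset.mem_image, eq_comm]
  rw [h]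
  exact MeasurableSet.biUnion (Finset.Icc _ _).countable_toSet
    fun s _ => meas_eq_aux (hmeas s) (hmeas 1)

/-- For a stationary `N`-valued process with miss rate
`m(T) = P(r 1 ∉ W(0,T))`, the sign-inverted discrete slope of the miss rate equals
the interreference-distance density: for every `T ≥ 0`,
`m(T) - m(T+1) = P(r 1 = r (-T) ∧ r 1 ∉ W(0,T))`,
the probability that the next reference repeats a unit at backward distance exactly
`T+1`; in particular `m(T) - m(T+1) ≥ 0`. -/
theorem missRate_slope_eq_interreference_density
    {Ω : Type*} [MeasurableSpace Ω] (μ : Measure Ω) [IsProbabilityMeasure μ]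
    {N : Type*} [Fintype N] [DecidableEq N] [MeasurableSpace N] [MeasurableSingletonClass N]
    (r : ℤ → Ω → N) (hmeas : ∀ t, Measurable (r t))
    (hstat : Measure.map (fun ω => fun t : ℤ => r (t + 1) ω) μ
           = Measure.map (fun ω => fun t : ℤ => r t ω) μ)
    (m : ℕ → ℝ)
    (hm : ∀ T : ℕ, m T = (μ {ω | r 1 ω ∉ workingSet (fun u => r u ω) 0 T}).toReal)
    (T : ℕ) :
    m T - m (T + 1)
      = (μ {ω | r 1 ω = r (-(T : ℤ)) ω ∧ r 1 ω ∉ workingSet (fun u => r u ω) 0 T}).toReal ∧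
    0 ≤ m T - m (T + 1) := by
  set A := {ω | r 1 ω ∉ workingSet (fun u => r u ω) 0 T} with hA
  set B := {ω | r 1 ω ∉ workingSet (fun u => r u ω) 0 (T + 1)} with hB
  set C := {ω | r 1 ω = r (-(T : ℤ)) ω ∧ r 1 ω ∉ workingSet (fun u => r u ω) 0 T} with hC
  -- membership characterization
  have hmem : ∀ (ω : Ω) (T' : ℕ), r 1 ω ∈ workingSet (fun u => r u ω) 0 T' ↔
      ∃ s : ℤ, (0 - (T' : ℤ) + 1 ≤ s ∧ s ≤ 0) ∧ r s ω = r 1 ω := by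
    intro ω T'
    simp [workingSet, Finset.mem_image, Finset.mem_Icc, eq_comm]
  have hsplit : A = B ∪ C := by
    ext ω
    simp only [hA, hB, hC, Set.mem_setOf_eq, Set.mem_union]
    constructor
    · intro h
      by_cases hb : r 1 ω ∈ workingSet (fun u => r u ω) 0 (T + 1)
      · right
        refine ⟨?_, h⟩
        rcases (hmem ω (T + 1)).1 hb with ⟨s, ⟨hs1, hs2⟩, hs3⟩
        have hsne : s = -(T : ℤ) := by
          by_contra hne
          exact h ((hmem ω T).2 ⟨s, ⟨by push_cast at hs1 ⊢; omega, hs2⟩, hs3⟩)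
        rw [hsne] at hs3; exact hs3.symm
      · left; exact hb
    · rintro (h | ⟨_, h⟩)
      · intro hmemA
        rcases (hmem ω T).1 hmemA with ⟨s, ⟨hs1, hs2⟩, hs3⟩
        exact h ((hmem ω (T + 1)).2 ⟨s, ⟨by push_cast at hs1 ⊢; omega, hs2⟩, hs3⟩)
      · exact h
  have hBmeas : MeasurableSet B := (meas_ws_aux r hmeas (T + 1)).compl
  have hCmeas : MeasurableSet C :=
    (meas_eq_aux (hmeas 1) (hmeas (-(T : ℤ)))).inter (meas_ws_aux r hmeas T).compl
  have hdisj : Disjoint B C := by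
    rw [Set.disjoint_left]
    rintro ω hb ⟨heq, _⟩
    exact hb ((hmem ω (T + 1)).2 ⟨-(T : ℤ), ⟨by push_cast; omega, by omega⟩, heq.symm⟩)
  have hμ : μ A = μ B + μ C := by rw [hsplit, measure_union hdisj hCmeas]
  have h1 : m T = (μ B).toReal + (μ C).toReal := by
    rw [hm T, hμ, ENNReal.toReal_add (measure_ne_top μ B) (measure_ne_top μ C)]
  have h2 : m (T + 1) = (μ B).toReal := hm (T + 1)
  constructor
  · rw [h1, h2]; ring
  · rw [h1, h2]; simp [ENNReal.toReal_nonneg]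
end
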